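/- Let T > 0 and, for each integer n ≥ 2, let f_n : [0,T] → ℝ be measurable and strictly positive, with f_n^{1/n} and f_{n+1}/f_n integrable on [0,T]. Suppose there exist constants B ≥ 0 and C ≥ 0 such that ⟨f₂^{1/2}⟩_T ≤ B and, for all n ≥ 2, ⟨f_{n+1}/f_n⟩_T ≤ C. Then for every integer n ≥ 2, ⟨f_n^{1/n}⟩_T ≤ C^{(n−2)/n}·B^{2/n}. -/

import Mathlib

open MeasureTheory Set

/-- The hierarchy induction: if `⟨f₂^{1/2}⟩_T ≤ B` and
`⟨f_{n+1}/f_n⟩_T ≤ C` for all `n ≥ 2`, then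
`⟨f_n^{1/n}⟩_T ≤ C^{(n−2)/n}·B^{2/n}` for every `n ≥ 2`. -/
theorem hierarchy_induction (T : ℝ) (hT : 0 < T) (f : ℕ → ℝ → ℝ)
    (hmeas : ∀ n ≥ 2, Measurable (f n))
    (hpos : ∀ n ≥ 2, ∀ t ∈ Set.Icc (0:ℝ) T, 0 < f n t)
    (hint1 : ∀ n ≥ 2, IntervalIntegrable
      (fun t => f n t ^ ((1:ℝ)/(n:ℝ))) MeasureTheory.volume 0 T)
    (hint2 : ∀ n ≥ 2, IntervalIntegrable
      (fun t => f (n+1) t / f n t) MeasureTheory.volume 0 T)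
    (B C : ℝ) (hB : 0 ≤ B) (hC : 0 ≤ C)
    (h2 : (1/T) * ∫ τ in (0:ℝ)..T, f 2 τ ^ ((1:ℝ)/2) ≤ B)
    (hrat : ∀ n ≥ 2, (1/T) * ∫ τ in (0:ℝ)..T, f (n+1) τ / f n τ ≤ C) :
    ∀ n ≥ 2, (1/T) * ∫ τ in (0:ℝ)..T, f n τ ^ ((1:ℝ)/(n:ℝ)) ≤
      C ^ (((n:ℝ) - 2)/(n:ℝ)) * B ^ ((2:ℝ)/(n:ℝ)) := by
  intro n hn
  induction n, hn using Nat.le_induction with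
  | base =>
    norm_num
    simpa using h2
  | succ n hn IH =>
    set μ := volume.restrict (Set.Ioc (0:ℝ) T) with hμ
    have hnR : (2:ℝ) ≤ (n:ℝ) := by exact_mod_cast hn
    have hn0 : (0:ℝ) < (n:ℝ) := by linarith
    have hp0 : (0:ℝ) < (n:ℝ) + 1 := by linarith
    set p : ℝ := (n:ℝ) + 1 with hp
    set q : ℝ := ((n:ℝ) + 1) / (n:ℝ) with hq
    have hq0 : (0:ℝ) < q := by rw [hq]; positivity
    have hpq : p.HolderConjugate q := by
      refine Real.holderConjugate_iff.2 ⟨?_, ?_⟩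
      · rw [hp]; linarith
      · rw [hp, hq]; field_simp; ring
    set F : ℝ → ℝ := fun t => (f (n+1) t / f n t) ^ (1/p) with hF
    set G : ℝ → ℝ := fun t => f n t ^ (1/p) with hG
    have hsub : Set.Ioc (0:ℝ) T ⊆ Set.Icc (0:ℝ) T := Set.Ioc_subset_Icc_self
    have hposn : ∀ t ∈ Set.Ioc (0:ℝ) T, 0 < f n t := fun t ht => hpos n hn t (hsub ht)
    have hposn1 : ∀ t ∈ Set.Ioc (0:ℝ) T, 0 < f (n+1) t :=
      fun t ht => hpos (n+1) (by omega) t (hsub ht)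
    have hFnn : ∀ t ∈ Set.Ioc (0:ℝ) T, 0 ≤ F t := fun t ht =>
      Real.rpow_nonneg (div_nonneg (hposn1 t ht).le (hposn t ht).le) _
    have hGnn : ∀ t ∈ Set.Ioc (0:ℝ) T, 0 ≤ G t := fun t ht =>
      Real.rpow_nonneg (hposn t ht).le _
    -- pointwise identities on Ioc
    have hFG : ∀ t ∈ Set.Ioc (0:ℝ) T, F t * G t = f (n+1) t ^ (1/p) := by
      intro t ht
      rw [hF, hG]
      rw [← Real.mul_rpow (div_nonneg (hposn1 t ht).le (hposn t ht).le) (hposn t ht).le,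
        div_mul_cancel₀ _ (hposn t ht).ne']
    have hFp : ∀ t ∈ Set.Ioc (0:ℝ) T, F t ^ p = f (n+1) t / f n t := by
      intro t ht
      rw [hF, ← Real.rpow_mul (div_nonneg (hposn1 t ht).le (hposn t ht).le),
        one_div_mul_cancel hpq.ne_zero, Real.rpow_one]
    have hGq : ∀ t ∈ Set.Ioc (0:ℝ) T, G t ^ q = f n t ^ ((1:ℝ)/(n:ℝ)) := by
      intro t ht
      rw [hG, ← Real.rpow_mul (hposn t ht).le]
      congr 1
      rw [hp, hq]
      field_simp
    -- measurability
    have hFmeas : Measurable F := by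
      have h1 := hmeas (n+1) (by omega); have h2 := hmeas n hn
      rw [hF]; fun_prop
    have hGmeas : Measurable G := by
      have h2 := hmeas n hn; rw [hG]; fun_prop
    -- integrability of the p-th / q-th powers
    have hratInt : Integrable (fun t => f (n+1) t / f n t) μ := (hint2 n hn).1
    have hfnInt : Integrable (fun t => f n t ^ ((1:ℝ)/(n:ℝ))) μ := (hint1 n hn).1
    have hFpInt : Integrable (fun t => ‖F t‖ ^ p) μ := by
      refine hratInt.congr ?_
      refine (ae_restrict_iff' measurableSet_Ioc).2 (Filter.Eventually.of_forall fun t ht => ?_)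
      show f (n+1) t / f n t = ‖F t‖ ^ p
      rw [Real.norm_of_nonneg (hFnn t ht), hFp t ht]
    have hGqInt : Integrable (fun t => ‖G t‖ ^ q) μ := by
      refine hfnInt.congr ?_
      refine (ae_restrict_iff' measurableSet_Ioc).2 (Filter.Eventually.of_forall fun t ht => ?_)
      show f n t ^ ((1:ℝ)/(n:ℝ)) = ‖G t‖ ^ q
      rw [Real.norm_of_nonneg (hGnn t ht), hGq t ht]
    -- Memℒp facts
    have memff : ∀ (r : ℝ) (H : ℝ → ℝ), 0 < r → Measurable H →
        Integrable (fun t => ‖H t‖ ^ r) μ → MemLp H (ENNReal.ofReal r) μ := by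
      intro r H hr hHm hHint
      have hne : ENNReal.ofReal r ≠ 0 := by
        simp [ENNReal.ofReal_eq_zero, not_le, hr]
      refine (memLp_norm_rpow_iff hHm.aestronglyMeasurable hne ENNReal.ofReal_ne_top).1 ?_
      have hdiv : ENNReal.ofReal r / ENNReal.ofReal r = 1 :=
        ENNReal.div_self hne ENNReal.ofReal_ne_top
      rw [hdiv, ENNReal.toReal_ofReal hr.le, memLp_one_iff_integrable]
      exact hHint
    have hFmem : MemLp F (ENNReal.ofReal p) μ := memff p F hpq.pos hFmeas hFpInt
    have hGmem : MemLp G (ENNReal.ofReal q) μ := memff q G hq0 hGmeas hGqInt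
    -- Hölder
    have hFae : 0 ≤ᵐ[μ] F :=
      (ae_restrict_iff' measurableSet_Ioc).2 (Filter.Eventually.of_forall hFnn)
    have hGae : 0 ≤ᵐ[μ] G :=
      (ae_restrict_iff' measurableSet_Ioc).2 (Filter.Eventually.of_forall hGnn)
    have holder := integral_mul_le_Lp_mul_Lq_of_nonneg hpq hFae hGae hFmem hGmem
    -- rewrite the three integrals
    have E1 : ∫ a, F a * G a ∂μ = ∫ t in Set.Ioc (0:ℝ) T, f (n+1) t ^ (1/p) :=
      setIntegral_congr_fun measurableSet_Ioc hFG
    have E2 : ∫ a, F a ^ p ∂μ = ∫ t in Set.Ioc (0:ℝ) T, f (n+1) t / f n t :=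
      setIntegral_congr_fun measurableSet_Ioc hFp
    have E3 : ∫ a, G a ^ q ∂μ = ∫ t in Set.Ioc (0:ℝ) T, f n t ^ ((1:ℝ)/(n:ℝ)) :=
      setIntegral_congr_fun measurableSet_Ioc hGq
    rw [E1, E2, E3] at holder
    set a : ℝ := ∫ t in Set.Ioc (0:ℝ) T, f (n+1) t / f n t with ha
    set b : ℝ := ∫ t in Set.Ioc (0:ℝ) T, f n t ^ ((1:ℝ)/(n:ℝ)) with hb
    have ha0 : 0 ≤ a :=
      setIntegral_nonneg measurableSet_Ioc fun t ht =>
        div_nonneg (hposn1 t ht).le (hposn t ht).le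
    have hb0 : 0 ≤ b :=
      setIntegral_nonneg measurableSet_Ioc fun t ht =>
        Real.rpow_nonneg (hposn t ht).le _
    have hT0 : (0:ℝ) ≤ 1/T := by positivity
    -- bounds from hypotheses
    have hXa : (1/T) * a ≤ C := by
      have := hrat n hn
      rwa [intervalIntegral.integral_of_le hT.le] at this
    have hYb : (1/T) * b ≤ C ^ (((n:ℝ) - 2)/(n:ℝ)) * B ^ ((2:ℝ)/(n:ℝ)) := by
      have := IH
      rwa [intervalIntegral.integral_of_le hT.le] at this
    have hXa0 : 0 ≤ (1/T) * a := mul_nonneg hT0 ha0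
    have hYb0 : 0 ≤ (1/T) * b := mul_nonneg hT0 hb0
    -- split 1/T across the product
    have hT1 : ((1/T:ℝ)) ^ (1/p) * (1/T) ^ (1/q) = 1/T := by
      rw [one_div p, one_div q, ← Real.rpow_add (by positivity), hpq.inv_add_inv_eq_one,
        Real.rpow_one]
    have key : (1/T) * (a ^ (1/p) * b ^ (1/q))
        = ((1/T) * a) ^ (1/p) * ((1/T) * b) ^ (1/q) := by
      rw [Real.mul_rpow hT0 ha0, Real.mul_rpow hT0 hb0, mul_mul_mul_comm, hT1]
    -- monotone step
    have step1 : ((1/T) * a) ^ (1/p) ≤ C ^ (1/p) :=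
      Real.rpow_le_rpow hXa0 hXa (by positivity)
    have step2 : ((1/T) * b) ^ (1/q) ≤ (C ^ (((n:ℝ) - 2)/(n:ℝ)) * B ^ ((2:ℝ)/(n:ℝ))) ^ (1/q) :=
      Real.rpow_le_rpow hYb0 hYb (by positivity)
    have hmain : (1/T) * ∫ t in Set.Ioc (0:ℝ) T, f (n+1) t ^ (1/p)
        ≤ C ^ (1/p) * (C ^ (((n:ℝ) - 2)/(n:ℝ)) * B ^ ((2:ℝ)/(n:ℝ))) ^ (1/q) := by
      calc (1/T) * ∫ t in Set.Ioc (0:ℝ) T, f (n+1) t ^ (1/p)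
          ≤ (1/T) * (a ^ (1/p) * b ^ (1/q)) := mul_le_mul_of_nonneg_left holder hT0
        _ = ((1/T) * a) ^ (1/p) * ((1/T) * b) ^ (1/q) := key
        _ ≤ C ^ (1/p) * (C ^ (((n:ℝ) - 2)/(n:ℝ)) * B ^ ((2:ℝ)/(n:ℝ))) ^ (1/q) :=
            mul_le_mul step1 step2 (Real.rpow_nonneg hYb0 _) (Real.rpow_nonneg hC _)
    -- final algebra on the right-hand side
    have hrhs : C ^ (1/p) * (C ^ (((n:ℝ) - 2)/(n:ℝ)) * B ^ ((2:ℝ)/(n:ℝ))) ^ (1/q)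
        = C ^ ((((n:ℕ)+1:ℝ) - 2)/(((n:ℕ):ℝ)+1)) * B ^ ((2:ℝ)/(((n:ℕ):ℝ)+1)) := by
      rw [Real.mul_rpow (Real.rpow_nonneg hC _) (Real.rpow_nonneg hB _),
        ← Real.rpow_mul hC, ← Real.rpow_mul hB, ← mul_assoc,
        ← Real.rpow_add' hC (by
          rw [hp, hq]
          have h1 : 1/((n:ℝ)+1) + ((n:ℝ) - 2)/(n:ℝ) * (1/(((n:ℝ)+1)/(n:ℝ)))
              = ((n:ℝ) - 1)/((n:ℝ)+1) := by field_simp; ring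
          rw [h1]
          exact ne_of_gt (div_pos (by linarith) (by linarith)))]
      congr 1
      · rw [hp, hq]; field_simp; ring
      · rw [hq]; field_simp
    rw [intervalIntegral.integral_of_le hT.le]
    push_cast
    calc (1/T) * ∫ t in Set.Ioc (0:ℝ) T, f (n+1) t ^ ((1:ℝ)/((n:ℝ)+1))
        = (1/T) * ∫ t in Set.Ioc (0:ℝ) T, f (n+1) t ^ (1/p) := by rw [hp]
      _ ≤ C ^ (1/p) * (C ^ (((n:ℝ) - 2)/(n:ℝ)) * B ^ ((2:ℝ)/(n:ℝ))) ^ (1/q) := hmain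
      _ = C ^ ((((n:ℕ)+1:ℝ) - 2)/(((n:ℕ):ℝ)+1)) * B ^ ((2:ℝ)/(((n:ℕ):ℝ)+1)) := hrhs
      _ = C ^ (((n:ℝ)+1 - 2)/((n:ℝ)+1)) * B ^ ((2:ℝ)/((n:ℝ)+1)) := by norm_num
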